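/- Let A, B, C be integers with A > 0, B > 0 and D := B² − 4AC < 0, and let q(m,n) = A·m² + B·m·n + C·n². Then the series whose terms are 1/( e(x,y) · e(x,x+y) · e(y,x+y) ), summed over all pairs (x,y) ∈ S, converges and its sum equals (1/D)·( arctan(√(−D)/B)/√(−D) − 1/B ), where arctan is the principal branch. (This is the paper's Theorem 5, formula (top2), for the topograph of q rooted at the standard-basis edge, with root edge label e₀ = B; the hypothesis B > 0 guarantees that all edge labels e in the upper half are positive, i.e. that the rooted half is admissible.) -/

import Mathlib

/-- The binary quadratic form `q(m,n) = A m² + B m n + C n²`, with real values. -/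
noncomputable def q (A B C : ℤ) (v : ℤ × ℤ) : ℝ :=
  (A : ℝ) * (v.1 : ℝ) ^ 2 + (B : ℝ) * (v.1 : ℝ) * (v.2 : ℝ) + (C : ℝ) * (v.2 : ℝ) ^ 2

/-- The edge label `e(u,v) = q(u+v) − q(u) − q(v)` (twice the polar form of `q`). -/
noncomputable def eLab (A B C : ℤ) (u v : ℤ × ℤ) : ℝ :=
  q A B C (u + v) - q A B C u - q A B C v

/-- Pairs of lattice vectors with nonnegative coordinates and determinant one. -/
def S : Set ((ℤ × ℤ) × (ℤ × ℤ)) :=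
  {p | 0 ≤ p.1.1 ∧ 0 ≤ p.1.2 ∧ 0 ≤ p.2.1 ∧ 0 ≤ p.2.2 ∧
    p.1.1 * p.2.2 - p.1.2 * p.2.1 = 1}

namespace Top5

open Real

/-! ### The binary tree of bases -/

def step (b : Bool) (p : (ℤ × ℤ) × (ℤ × ℤ)) : (ℤ × ℤ) × (ℤ × ℤ) :=
  if b then (p.1 + p.2, p.2) else (p.1, p.1 + p.2)

def pr : List Bool → (ℤ × ℤ) × (ℤ × ℤ)
  | [] => ((1, 0), (0, 1))
  | b :: l => step b (pr l)

def Good (p : (ℤ × ℤ) × (ℤ × ℤ)) : Prop :=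
  0 ≤ p.1.1 ∧ 0 ≤ p.1.2 ∧ 0 ≤ p.2.1 ∧ 0 ≤ p.2.2 ∧
    p.1.1 * p.2.2 - p.1.2 * p.2.1 = 1 ∧ 1 ≤ p.1.1 + p.1.2 ∧ 1 ≤ p.2.1 + p.2.2

lemma good_pr (l : List Bool) : Good (pr l) := by
  induction l with
  | nil => exact ⟨by norm_num [pr], by norm_num [pr], by norm_num [pr], by norm_num [pr],
      by norm_num [pr], by norm_num [pr], by norm_num [pr]⟩
  | cons b l ih =>
    rcases hpl : pr l with ⟨⟨x1, x2⟩, ⟨y1, y2⟩⟩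
    rw [hpl] at ih
    obtain ⟨h1, h2, h3, h4, h5, h6, h7⟩ := ih
    simp only at h1 h2 h3 h4 h5 h6 h7
    have hstep : pr (b :: l) = step b ((x1, x2), (y1, y2)) := by rw [pr, hpl]
    rw [hstep]
    cases b <;> simp only [step, if_true, if_false, Bool.false_eq_true, Prod.mk_add_mk, Good] <;>
      exact ⟨by omega, by omega, by omega, by omega, by linear_combination h5, by omega, by omega⟩

lemma pr_mem_S (l : List Bool) : pr l ∈ S := by
  obtain ⟨h1, h2, h3, h4, h5, _, _⟩ := good_pr l
  exact ⟨h1, h2, h3, h4, h5⟩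

def s1 (l : List Bool) : ℤ := (pr l).1.1 + (pr l).1.2
def s2 (l : List Bool) : ℤ := (pr l).2.1 + (pr l).2.2

lemma s1_pos (l : List Bool) : 1 ≤ s1 l := (good_pr l).2.2.2.2.2.1
lemma s2_pos (l : List Bool) : 1 ≤ s2 l := (good_pr l).2.2.2.2.2.2

lemma s_cons (b : Bool) (l : List Bool) :
    (s1 (b :: l), s2 (b :: l)) = if b then (s1 l + s2 l, s2 l) else (s1 l, s1 l + s2 l) := by
  cases b <;> simp only [s1, s2, pr, step, if_true, if_false, Bool.false_eq_true,
    Prod.fst_add, Prod.snd_add, Prod.mk.injEq, and_true, true_and] <;> ring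

lemma s1_cons_false (l : List Bool) : s1 (false :: l) = s1 l := by
  have := s_cons false l; simp at this; exact this.1
lemma s2_cons_false (l : List Bool) : s2 (false :: l) = s1 l + s2 l := by
  have := s_cons false l; simp at this; exact this.2
lemma s1_cons_true (l : List Bool) : s1 (true :: l) = s1 l + s2 l := by
  have := s_cons true l; simp at this; exact this.1
lemma s2_cons_true (l : List Bool) : s2 (true :: l) = s2 l := by
  have := s_cons true l; simp at this; exact this.2

lemma s_inj : ∀ l₁ l₂ : List Bool, s1 l₁ = s1 l₂ → s2 l₁ = s2 l₂ → l₁ = l₂ := by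
  intro l₁
  induction l₁ with
  | nil =>
    intro l₂ h1 h2
    cases l₂ with
    | nil => rfl
    | cons b l =>
      exfalso
      have e1 := s1_pos l; have e2 := s2_pos l
      have a1 : s1 [] = 1 := by norm_num [s1, pr]
      have a2 : s2 [] = 1 := by norm_num [s2, pr]
      cases b
      · rw [s1_cons_false] at h1; rw [s2_cons_false] at h2; omega
      · rw [s1_cons_true] at h1; rw [s2_cons_true] at h2; omega
  | cons b l ih =>
    intro l₂ h1 h2
    cases l₂ with
    | nil =>
      exfalso
      have e1 := s1_pos l; have e2 := s2_pos l
      have a1 : s1 [] = 1 := by norm_num [s1, pr]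
      have a2 : s2 [] = 1 := by norm_num [s2, pr]
      cases b
      · rw [s1_cons_false] at h1; rw [s2_cons_false] at h2; omega
      · rw [s1_cons_true] at h1; rw [s2_cons_true] at h2; omega
    | cons b' l' =>
      have e1 := s1_pos l; have e2 := s2_pos l
      have e1' := s1_pos l'; have e2' := s2_pos l'
      cases b <;> cases b' <;>
        simp only [s1_cons_false, s2_cons_false, s1_cons_true, s2_cons_true] at h1 h2
      · rw [ih l' h1 (by omega)]
      · omega
      · omega
      · rw [ih l' (by omega) h2]

lemma pr_inj : Function.Injective pr := by
  intro l₁ l₂ h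
  exact s_inj l₁ l₂ (by rw [s1, s1, h]) (by rw [s2, s2, h])

lemma pr_surj : ∀ n : ℕ, ∀ p ∈ S, p.1.1 + p.1.2 + p.2.1 + p.2.2 ≤ (n : ℤ) → ∃ l, pr l = p := by
  intro n
  induction n with
  | zero =>
    rintro ⟨⟨x1, x2⟩, ⟨y1, y2⟩⟩ ⟨h1, h2, h3, h4, h5⟩ hn
    exfalso
    simp only at h1 h2 h3 h4 h5 hn
    have hx : ¬(x1 = 0 ∧ x2 = 0) := by rintro ⟨rfl, rfl⟩; simp at h5
    omega
  | succ n ih =>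
    rintro ⟨⟨x1, x2⟩, ⟨y1, y2⟩⟩ ⟨h1, h2, h3, h4, h5⟩ hn
    simp only at h1 h2 h3 h4 h5 hn
    have hx : ¬(x1 = 0 ∧ x2 = 0) := by rintro ⟨rfl, rfl⟩; simp at h5
    have hy : ¬(y1 = 0 ∧ y2 = 0) := by rintro ⟨rfl, rfl⟩; simp at h5
    by_cases hxy : x1 ≤ y1 ∧ x2 ≤ y2
    · by_cases hyx : y1 ≤ x1 ∧ y2 ≤ x2
      · exfalso; have : x1 = y1 := by omega
        have : x2 = y2 := by omega
        nlinarith [h5]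
      · obtain ⟨l, hl⟩ := ih ((x1, x2), (y1 - x1, y2 - x2))
          ⟨h1, h2, by simp; omega, by simp; omega, by simp; linear_combination h5⟩
          (by simp; omega)
        refine ⟨false :: l, ?_⟩
        rw [pr, hl]
        simp [step, Prod.ext_iff] <;> omega
    · by_cases hyx : y1 ≤ x1 ∧ y2 ≤ x2
      · obtain ⟨l, hl⟩ := ih ((x1 - y1, x2 - y2), (y1, y2))
          ⟨by simp; omega, by simp; omega, h3, h4, by simp; linear_combination h5⟩
          (by simp; omega)
        refine ⟨true :: l, ?_⟩
        rw [pr, hl]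
        simp [step, Prod.ext_iff] <;> omega
      · push_neg at hxy hyx
        refine ⟨[], ?_⟩
        have hroot : x1 = 1 ∧ x2 = 0 ∧ y1 = 0 ∧ y2 = 1 := by
          rcases le_or_gt x1 y1 with c1 | c1
          · have c2 : y2 < x2 := hxy c1
            rcases eq_or_lt_of_le c1 with rfl | c1'
            · exact absurd (hyx le_rfl) (by omega)
            · exfalso; nlinarith
          · have c2 : x2 < y2 := hyx c1.le
            have key : y1 + x2 = 0 := by nlinarith
            have hy1 : y1 = 0 := by omega
            have hx2 : x2 = 0 := by omega
            subst hy1; subst hx2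
            simp only [mul_zero, zero_mul, sub_zero, mul_one] at h5
            have hx1 : 1 ≤ x1 := by omega
            have hy2 : 1 ≤ y2 := by omega
            have : x1 = 1 := by nlinarith
            refine ⟨this, rfl, rfl, by nlinarith⟩
        obtain ⟨rfl, rfl, rfl, rfl⟩ := hroot
        rfl

/-! ### Elementary arctan estimates -/

lemma arctan_le_self' {x : ℝ} (hx : 0 ≤ x) : arctan x ≤ x := by
  have hmono : Monotone (fun x : ℝ => x - arctan x) := by
    apply monotone_of_deriv_nonneg
    · exact differentiable_id.sub Real.differentiable_arctan
    · intro y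
      have h : HasDerivAt (fun x : ℝ => x - arctan x) (1 - 1 / (1 + y ^ 2)) y :=
        (hasDerivAt_id y).sub (Real.hasDerivAt_arctan y)
      rw [h.deriv]
      have : (0:ℝ) < 1 + y ^ 2 := by positivity
      rw [sub_nonneg, div_le_one this]
      nlinarith
  have := hmono hx
  simpa [Real.arctan_zero] using this

lemma sub_arctan_le_cube' {x : ℝ} (hx : 0 ≤ x) : x - arctan x ≤ x ^ 3 := by
  have hmono : Monotone (fun x : ℝ => x ^ 3 + arctan x - x) := by
    apply monotone_of_deriv_nonneg
    · exact ((differentiable_id.pow 3).add Real.differentiable_arctan).sub differentiable_id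
    · intro y
      have h : HasDerivAt (fun x : ℝ => x ^ 3 + arctan x - x)
          (3 * y ^ 2 + 1 / (1 + y ^ 2) - 1) y := by
        have h1 : HasDerivAt (fun x : ℝ => x ^ 3) (3 * y ^ 2) y := by
          simpa using hasDerivAt_pow 3 y
        exact (h1.add (Real.hasDerivAt_arctan y)).sub (hasDerivAt_id y)
      rw [h.deriv]
      have hpos : (0:ℝ) < 1 + y ^ 2 := by positivity
      have heq : 3 * y ^ 2 + 1 / (1 + y ^ 2) - 1 = (3 * y ^ 4 + 2 * y ^ 2) / (1 + y ^ 2) := by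
        field_simp; ring
      rw [heq]; positivity
  have := hmono hx
  simp only [Real.arctan_zero] at this
  norm_num at this
  linarith

/-! ### The telescoping function -/

noncomputable def g (DR a : ℝ) : ℝ :=
  (1 / DR) * (arctan (Real.sqrt (-DR) / a) / Real.sqrt (-DR) - 1 / a)

lemma tele {DR a b c : ℝ} (hD : DR < 0) (ha : 0 < a) (hb : 0 < b) (hc : 0 < c)
    (hrel : b * c = a * (b + c) - DR) :
    1 / (a * b * c) = g DR a - g DR b - g DR c := by
  simp only [g]
  set t := Real.sqrt (-DR) with htdef
  have ht : 0 < t := Real.sqrt_pos.2 (by linarith)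
  have ht2 : t ^ 2 = -DR := Real.sq_sqrt (by linarith)
  have habc : 0 < a * (b + c) := mul_pos ha (by linarith)
  have hbc : t ^ 2 < b * c := by nlinarith
  have hmul : t / b * (t / c) < 1 := by
    rw [div_mul_div_comm, ← sq]
    exact (div_lt_one (by positivity)).2 hbc
  have harc : arctan (t / b) + arctan (t / c) = arctan (t / a) := by
    rw [Real.arctan_add hmul]
    congr 1
    rw [div_eq_div_iff (ne_of_gt (by nlinarith [hmul] : (0:ℝ) < 1 - t / b * (t / c)))
      (ne_of_gt ha)]
    field_simp
    nlinarith [hrel, ht2, ht]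
  rw [← harc]
  have hDne : DR ≠ 0 := ne_of_lt hD
  have hexp :
      (1 / DR) * ((arctan (t / b) + arctan (t / c)) / t - 1 / a) -
        (1 / DR) * (arctan (t / b) / t - 1 / b) -
        (1 / DR) * (arctan (t / c) / t - 1 / c) =
      (1 / DR) * (- 1 / a + 1 / b + 1 / c) := by
    field_simp
    ring
  rw [hexp]
  rw [div_eq_iff (by positivity : a * b * c ≠ 0)]
  field_simp
  linear_combination hrel

lemma g_nonneg {DR a : ℝ} (hD : DR < 0) (ha : 0 < a) : 0 ≤ g DR a := by
  have ht : 0 < Real.sqrt (-DR) := Real.sqrt_pos.2 (by linarith)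
  have h1 : arctan (Real.sqrt (-DR) / a) ≤ Real.sqrt (-DR) / a :=
    arctan_le_self' (by positivity)
  have h2 : arctan (Real.sqrt (-DR) / a) / Real.sqrt (-DR) ≤ 1 / a := by
    rw [div_le_iff₀ ht]
    calc arctan (Real.sqrt (-DR) / a) ≤ Real.sqrt (-DR) / a := h1
    _ = 1 / a * Real.sqrt (-DR) := by ring
  have h3 : arctan (Real.sqrt (-DR) / a) / Real.sqrt (-DR) - 1 / a ≤ 0 := by linarith
  have h4 : 1 / DR < 0 := div_neg_of_pos_of_neg one_pos hD
  have h5 := mul_nonneg (neg_nonneg.2 h4.le) (neg_nonneg.2 h3)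
  rw [neg_mul_neg] at h5
  rw [g]; exact h5

lemma g_le_cube {DR a : ℝ} (hD : DR < 0) (ha : 0 < a) : g DR a ≤ 1 / a ^ 3 := by
  rw [g]
  set t := Real.sqrt (-DR) with htdef
  have ht : 0 < t := Real.sqrt_pos.2 (by linarith)
  have ht2 : t ^ 2 = -DR := Real.sq_sqrt (by linarith)
  have hkey : t / a - (t / a) ^ 3 ≤ arctan (t / a) := by
    have := sub_arctan_le_cube' (x := t / a) (by positivity)
    linarith
  have h3' : (t / a - (t / a) ^ 3) / t ≤ arctan (t / a) / t := by gcongr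
  have e : (t / a - (t / a) ^ 3) / t = 1 / a - t ^ 2 / a ^ 3 := by
    field_simp
  rw [e] at h3'
  have h5 : -(t ^ 2 / a ^ 3) ≤ arctan (t / a) / t - 1 / a := by linarith
  have h6 : (1 / DR) * (arctan (t / a) / t - 1 / a) ≤ (1 / DR) * (-(t ^ 2 / a ^ 3)) :=
    mul_le_mul_of_nonpos_left h5 (le_of_lt (div_neg_of_pos_of_neg one_pos hD))
  have h7 : (1 / DR) * (-(t ^ 2 / a ^ 3)) = 1 / a ^ 3 := by
    have hDeq : DR = -t ^ 2 := by linarith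
    rw [hDeq]
    have : t ^ 2 ≠ 0 := by positivity
    field_simp
  linarith

lemma g_antitone {DR a b : ℝ} (hD : DR < 0) (ha : 0 < a) (hab : a ≤ b) : g DR b ≤ 1 / a ^ 3 :=
  le_trans (g_le_cube hD (lt_of_lt_of_le ha hab))
    (one_div_le_one_div_of_le (by positivity) (pow_le_pow_left₀ ha.le hab 3))

/-! ### Quadratic form algebra -/

section Params
variable (A B C : ℤ)

lemma eLab_comm (u v : ℤ × ℤ) : eLab A B C u v = eLab A B C v u := by
  simp only [eLab, q, Prod.fst_add, Prod.snd_add]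
  push_cast
  ring

lemma eLab_left (u v : ℤ × ℤ) : eLab A B C u (u + v) = eLab A B C u v + 2 * q A B C u := by
  simp only [eLab, q, Prod.fst_add, Prod.snd_add]
  push_cast
  ring

lemma eLab_right (u v : ℤ × ℤ) : eLab A B C v (u + v) = eLab A B C u v + 2 * q A B C v := by
  simp only [eLab, q, Prod.fst_add, Prod.snd_add]
  push_cast
  ring

lemma disc_identity (u v : ℤ × ℤ) :
    4 * q A B C u * q A B C v =
      (eLab A B C u v) ^ 2 -
        ((B : ℝ) ^ 2 - 4 * A * C) * ((u.1 * v.2 - u.2 * v.1 : ℤ) : ℝ) ^ 2 := by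
  simp only [eLab, q, Prod.fst_add, Prod.snd_add]
  push_cast
  ring

lemma q_nonneg (hA : 0 < A) (hB : 0 < B) (hC : 0 < C) (u : ℤ × ℤ)
    (h1 : 0 ≤ u.1) (h2 : 0 ≤ u.2) : 0 ≤ q A B C u := by
  have hA' : (0:ℝ) ≤ A := by exact_mod_cast hA.le
  have hB' : (0:ℝ) ≤ B := by exact_mod_cast hB.le
  have hC' : (0:ℝ) ≤ C := by exact_mod_cast hC.le
  have h1' : (0:ℝ) ≤ (u.1 : ℝ) := by exact_mod_cast h1
  have h2' : (0:ℝ) ≤ (u.2 : ℝ) := by exact_mod_cast h2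
  simp only [q]
  positivity

lemma hC_pos (hA : 0 < A) (hD : B ^ 2 - 4 * A * C < 0) : 0 < C := by
  by_contra h
  push_neg at h
  nlinarith [sq_nonneg B, mul_nonneg hA.le (neg_nonneg.2 h)]

lemma eLab_lower (hA : 0 < A) (hB : 0 < B) (hD : B ^ 2 - 4 * A * C < 0)
    {x1 x2 y1 y2 : ℤ} (h1 : 0 ≤ x1) (h2 : 0 ≤ x2) (h3 : 0 ≤ y1) (h4 : 0 ≤ y2) :
    (((x1 + x2) * (y1 + y2) : ℤ) : ℝ) ≤ eLab A B C (x1, x2) (y1, y2) := by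
  have hC := hC_pos A B C hA hD
  have heq : eLab A B C (x1, x2) (y1, y2) =
      ((2 * A * x1 * y1 + B * (x1 * y2 + x2 * y1) + 2 * C * x2 * y2 : ℤ) : ℝ) := by
    simp only [eLab, q, Prod.fst_add, Prod.snd_add]
    push_cast
    ring
  rw [heq]
  have : (x1 + x2) * (y1 + y2) ≤ 2 * A * x1 * y1 + B * (x1 * y2 + x2 * y1) + 2 * C * x2 * y2 := by
    nlinarith [mul_nonneg h1 h3, mul_nonneg h1 h4, mul_nonneg h2 h3, mul_nonneg h2 h4,
      mul_nonneg (mul_nonneg (by omega : (0:ℤ) ≤ 2 * A - 1) h1) h3,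
      mul_nonneg (mul_nonneg (by omega : (0:ℤ) ≤ B - 1) h1) h4,
      mul_nonneg (mul_nonneg (by omega : (0:ℤ) ≤ B - 1) h2) h3,
      mul_nonneg (mul_nonneg (by omega : (0:ℤ) ≤ 2 * C - 1) h2) h4]
  exact_mod_cast this

/-! ### Tree functions -/

/-- the label of the edge above the vertex indexed by `l` -/
noncomputable def aL (l : List Bool) : ℝ := eLab A B C (pr l).1 (pr l).2

/-- the summand at the vertex indexed by `l` -/
noncomputable def term (l : List Bool) : ℝ :=
  1 / (eLab A B C (pr l).1 (pr l).2 * eLab A B C (pr l).1 ((pr l).1 + (pr l).2) *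
    eLab A B C (pr l).2 ((pr l).1 + (pr l).2))

/-- the telescoping function of the edge above the vertex indexed by `l` -/
noncomputable def hh (l : List Bool) : ℝ := g ((B : ℝ) ^ 2 - 4 * A * C) (aL A B C l)

variable {A B C}

lemma DR_neg (hD : B ^ 2 - 4 * A * C < 0) : ((B : ℝ) ^ 2 - 4 * A * C) < 0 := by
  exact_mod_cast hD

lemma aL_lower (hA : 0 < A) (hB : 0 < B) (hD : B ^ 2 - 4 * A * C < 0) (l : List Bool) :
    ((s1 l * s2 l : ℤ) : ℝ) ≤ aL A B C l := by
  obtain ⟨h1, h2, h3, h4, h5, h6, h7⟩ := good_pr l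
  have := eLab_lower A B C hA hB hD h1 h2 h3 h4
  simpa only [aL, s1, s2, Prod.mk.eta] using this

lemma aL_pos (hA : 0 < A) (hB : 0 < B) (hD : B ^ 2 - 4 * A * C < 0) (l : List Bool) :
    0 < aL A B C l := by
  have h := aL_lower hA hB hD l
  have h1 := s1_pos l
  have h2 := s2_pos l
  have : (1 : ℝ) ≤ ((s1 l * s2 l : ℤ) : ℝ) := by
    exact_mod_cast one_le_mul_of_one_le_of_one_le h1 h2
  linarith

lemma pr_cons_false (l : List Bool) : pr (false :: l) = ((pr l).1, (pr l).1 + (pr l).2) := by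
  rw [pr, step]; simp

lemma pr_cons_true (l : List Bool) : pr (true :: l) = ((pr l).1 + (pr l).2, (pr l).2) := by
  rw [pr, step]; simp

lemma vertex_identity (hA : 0 < A) (hB : 0 < B) (hD : B ^ 2 - 4 * A * C < 0) (l : List Bool) :
    term A B C l = hh A B C l - hh A B C (false :: l) - hh A B C (true :: l) := by
  obtain ⟨h1, h2, h3, h4, h5, h6, h7⟩ := good_pr l
  have hC := hC_pos A B C hA hD
  set x := (pr l).1 with hx
  set y := (pr l).2 with hy
  have hax : aL A B C (false :: l) = eLab A B C x (x + y) := by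
    rw [aL, pr_cons_false]
  have hay : aL A B C (true :: l) = eLab A B C y (x + y) := by
    rw [aL, pr_cons_true]
    exact eLab_comm A B C _ _
  have hqx : 0 ≤ q A B C x := q_nonneg A B C hA hB hC x h1 h2
  have hqy : 0 ≤ q A B C y := q_nonneg A B C hA hB hC y h3 h4
  have ha : 0 < aL A B C l := aL_pos hA hB hD l
  have hb' : eLab A B C x (x + y) = aL A B C l + 2 * q A B C x := eLab_left A B C x y
  have hc' : eLab A B C y (x + y) = aL A B C l + 2 * q A B C y := eLab_right A B C x y
  have hbpos : 0 < eLab A B C x (x + y) := by rw [hb']; linarith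
  have hcpos : 0 < eLab A B C y (x + y) := by rw [hc']; linarith
  have hdisc := disc_identity A B C x y
  have hdet : ((x.1 * y.2 - x.2 * y.1 : ℤ) : ℝ) = 1 := by exact_mod_cast h5
  rw [hdet] at hdisc
  have hrel : eLab A B C x (x + y) * eLab A B C y (x + y) =
      aL A B C l * (eLab A B C x (x + y) + eLab A B C y (x + y)) -
        ((B : ℝ) ^ 2 - 4 * A * C) := by
    rw [hb', hc']
    have heq : eLab A B C x y = aL A B C l := rfl
    rw [heq] at hdisc
    nlinarith [hdisc]
  have hT := tele (DR_neg hD) ha hbpos hcpos hrel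
  simp only [hh, hax, hay]
  rw [← hT]
  rfl

lemma hh_nonneg (hA : 0 < A) (hB : 0 < B) (hD : B ^ 2 - 4 * A * C < 0) (l : List Bool) :
    0 ≤ hh A B C l :=
  g_nonneg (DR_neg hD) (aL_pos hA hB hD l)

lemma term_nonneg (hA : 0 < A) (hB : 0 < B) (hD : B ^ 2 - 4 * A * C < 0) (l : List Bool) :
    0 ≤ term A B C l := by
  have ha := aL_pos hA hB hD l
  have hb := aL_pos hA hB hD (false :: l)
  have hc := aL_pos hA hB hD (true :: l)
  rw [aL] at ha
  rw [aL, pr_cons_false] at hb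
  rw [aL, pr_cons_true] at hc
  rw [eLab_comm] at hc
  rw [term]
  positivity

lemma term_le_hh (hA : 0 < A) (hB : 0 < B) (hD : B ^ 2 - 4 * A * C < 0) (l : List Bool) :
    term A B C l ≤ hh A B C l := by
  rw [vertex_identity hA hB hD l]
  have t1 := hh_nonneg hA hB hD (false :: l)
  have t2 := hh_nonneg hA hB hD (true :: l)
  linarith

lemma hh_le (hA : 0 < A) (hB : 0 < B) (hD : B ^ 2 - 4 * A * C < 0) (l : List Bool) :
    hh A B C l ≤ 1 / ((s1 l : ℝ) * (s2 l : ℝ)) ^ 3 := by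
  have h1 := s1_pos l
  have h2 := s2_pos l
  have hpos : (0 : ℝ) < (s1 l : ℝ) * (s2 l : ℝ) := by
    have e1 : (0:ℝ) < (s1 l : ℝ) := by exact_mod_cast lt_of_lt_of_le zero_lt_one h1
    have e2 : (0:ℝ) < (s2 l : ℝ) := by exact_mod_cast lt_of_lt_of_le zero_lt_one h2
    positivity
  have hle : (s1 l : ℝ) * (s2 l : ℝ) ≤ aL A B C l := by
    have := aL_lower hA hB hD l
    push_cast at this
    exact this
  exact g_antitone (DR_neg hD) hpos hle

/-! ### Summability -/

lemma summable_hh (hA : 0 < A) (hB : 0 < B) (hD : B ^ 2 - 4 * A * C < 0) :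
    Summable (hh A B C) := by
  have h3 : Summable (fun n : ℕ => 1 / (n : ℝ) ^ 3) :=
    Real.summable_one_div_nat_pow.2 (by norm_num)
  have hGsum : Summable (fun p : ℕ × ℕ => (1 / (p.1 : ℝ) ^ 3) * (1 / (p.2 : ℝ) ^ 3)) :=
    Summable.mul_of_nonneg (f := fun n : ℕ => 1 / (n : ℝ) ^ 3)
      (g := fun n : ℕ => 1 / (n : ℝ) ^ 3) h3 h3
      (Pi.le_def.mpr fun n => by positivity) (Pi.le_def.mpr fun n => by positivity)
  have hinj : Function.Injective (fun l : List Bool => ((s1 l).toNat, (s2 l).toNat)) := by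
    intro l₁ l₂ h
    simp only [Prod.mk.injEq] at h
    have e1 := s1_pos l₁; have e2 := s1_pos l₂
    have e3 := s2_pos l₁; have e4 := s2_pos l₂
    exact s_inj l₁ l₂ (by omega) (by omega)
  refine Summable.of_nonneg_of_le (hh_nonneg hA hB hD) (fun l => ?_)
    (hGsum.comp_injective hinj)
  have hle := hh_le hA hB hD l
  have h1 := s1_pos l; have h2 := s2_pos l
  have e1 : (((s1 l).toNat : ℕ) : ℝ) = (s1 l : ℝ) := by
    have : (((s1 l).toNat : ℕ) : ℤ) = s1 l := Int.toNat_of_nonneg (by omega)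
    exact_mod_cast this
  have e2 : (((s2 l).toNat : ℕ) : ℝ) = (s2 l : ℝ) := by
    have : (((s2 l).toNat : ℕ) : ℤ) = s2 l := Int.toNat_of_nonneg (by omega)
    exact_mod_cast this
  show hh A B C l ≤ (1 / (((s1 l).toNat : ℝ)) ^ 3) * (1 / ((s2 l).toNat : ℝ) ^ 3)
  rw [e1, e2]
  calc hh A B C l ≤ 1 / ((s1 l : ℝ) * (s2 l : ℝ)) ^ 3 := hle
    _ = 1 / (s1 l : ℝ) ^ 3 * (1 / (s2 l : ℝ) ^ 3) := by
        rw [mul_pow, ← one_div_mul_one_div]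

lemma summable_term (hA : 0 < A) (hB : 0 < B) (hD : B ^ 2 - 4 * A * C < 0) :
    Summable (term A B C) :=
  Summable.of_nonneg_of_le (term_nonneg hA hB hD) (term_le_hh hA hB hD) (summable_hh hA hB hD)

/-! ### Levels of the tree -/

end Params

def Ln : ℕ → Finset (List Bool)
  | 0 => {[]}
  | n + 1 => (Ln n).image (List.cons false) ∪ (Ln n).image (List.cons true)

def Un : ℕ → Finset (List Bool)
  | 0 => ∅
  | n + 1 => Un n ∪ Ln n

lemma length_of_mem_Ln : ∀ n, ∀ l ∈ Ln n, l.length = n := by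
  intro n
  induction n with
  | zero => intro l hl; simp only [Ln, Finset.mem_singleton] at hl; simp [hl]
  | succ n ih =>
    intro l hl
    simp only [Ln, Finset.mem_union, Finset.mem_image] at hl
    rcases hl with ⟨a, ha, rfl⟩ | ⟨a, ha, rfl⟩ <;> simp [ih a ha]

lemma mem_Ln_length : ∀ l : List Bool, l ∈ Ln l.length := by
  intro l
  induction l with
  | nil => simp [Ln]
  | cons b l ih =>
    cases b <;> simp only [List.length_cons, Ln, Finset.mem_union, Finset.mem_image]
    · exact Or.inl ⟨l, ih, rfl⟩
    · exact Or.inr ⟨l, ih, rfl⟩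

lemma length_of_mem_Un : ∀ n, ∀ l ∈ Un n, l.length < n := by
  intro n
  induction n with
  | zero => intro l hl; simp [Un] at hl
  | succ n ih =>
    intro l hl
    simp only [Un, Finset.mem_union] at hl
    rcases hl with h | h
    · exact lt_trans (ih l h) (Nat.lt_succ_self n)
    · rw [length_of_mem_Ln n l h]; exact Nat.lt_succ_self n

lemma Un_mono : Monotone Un :=
  monotone_nat_of_le_succ fun n => by
    rw [show Un (n + 1) = Un n ∪ Ln n from rfl]
    exact Finset.subset_union_left

lemma mem_Un (l : List Bool) : l ∈ Un (l.length + 1) := by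
  rw [show Un (l.length + 1) = Un l.length ∪ Ln l.length from rfl]
  exact Finset.mem_union.2 (Or.inr (mem_Ln_length l))

lemma disj_Un_Ln (n : ℕ) : Disjoint (Un n) (Ln n) := by
  rw [Finset.disjoint_left]
  intro l h1 h2
  have := length_of_mem_Un n l h1
  have := length_of_mem_Ln n l h2
  omega

lemma sum_Un_succ (f : List Bool → ℝ) (n : ℕ) :
    ∑ l ∈ Un (n + 1), f l = ∑ l ∈ Un n, f l + ∑ l ∈ Ln n, f l := by
  rw [show Un (n + 1) = Un n ∪ Ln n from rfl]
  exact Finset.sum_union (disj_Un_Ln n)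

lemma sum_Ln_succ (f : List Bool → ℝ) (n : ℕ) :
    ∑ l ∈ Ln (n + 1), f l = ∑ l ∈ Ln n, (f (false :: l) + f (true :: l)) := by
  have hdisj : Disjoint ((Ln n).image (List.cons false)) ((Ln n).image (List.cons true)) := by
    rw [Finset.disjoint_left]
    rintro l h1 h2
    obtain ⟨a, _, rfl⟩ := Finset.mem_image.1 h1
    obtain ⟨b, _, hb⟩ := Finset.mem_image.1 h2
    exact absurd hb (by simp)
  rw [show Ln (n + 1) = (Ln n).image (List.cons false) ∪ (Ln n).image (List.cons true) from rfl]
  rw [Finset.sum_union hdisj,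
    Finset.sum_image (fun a _ b _ h => by simpa using h),
    Finset.sum_image (fun a _ b _ h => by simpa using h),
    ← Finset.sum_add_distrib]

section Params2
variable {A B C : ℤ}

lemma invariant (hA : 0 < A) (hB : 0 < B) (hD : B ^ 2 - 4 * A * C < 0) (n : ℕ) :
    (∑ l ∈ Un n, term A B C l) + (∑ l ∈ Ln n, hh A B C l) = hh A B C [] := by
  induction n with
  | zero => simp [Un, Ln]
  | succ n ih =>
    rw [sum_Un_succ, sum_Ln_succ]
    have hsub : ∑ l ∈ Ln n, (hh A B C (false :: l) + hh A B C (true :: l)) =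
        ∑ l ∈ Ln n, hh A B C l - ∑ l ∈ Ln n, term A B C l := by
      rw [← Finset.sum_sub_distrib]
      apply Finset.sum_congr rfl
      intro l _
      have := vertex_identity hA hB hD l
      linarith
    rw [hsub]
    linarith

lemma hh_nil : hh A B C [] = g ((B : ℝ) ^ 2 - 4 * A * C) (B : ℝ) := by
  rw [hh]
  congr 1
  show eLab A B C (1, 0) (0, 1) = (B : ℝ)
  simp only [eLab, q, Prod.mk_add_mk]
  push_cast
  ring

lemma Sn_tendsto_zero (hA : 0 < A) (hB : 0 < B) (hD : B ^ 2 - 4 * A * C < 0) :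
    Filter.Tendsto (fun n => ∑ l ∈ Ln n, hh A B C l) Filter.atTop (nhds 0) := by
  have hsummable : Summable (fun n => ∑ l ∈ Ln n, hh A B C l) := by
    apply summable_of_sum_range_le (c := ∑' l, hh A B C l)
    · intro n
      exact Finset.sum_nonneg fun l _ => hh_nonneg hA hB hD l
    · intro n
      have hUe : ∑ k ∈ Finset.range n, ∑ l ∈ Ln k, hh A B C l = ∑ l ∈ Un n, hh A B C l := by
        induction n with
        | zero => simp [Un]
        | succ m ihm => rw [Finset.sum_range_succ, ihm, sum_Un_succ]
      rw [hUe]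
      exact Summable.sum_le_tsum _ (fun l _ => hh_nonneg hA hB hD l) (summable_hh hA hB hD)
  exact hsummable.tendsto_atTop_zero

lemma tsum_term_eq (hA : 0 < A) (hB : 0 < B) (hD : B ^ 2 - 4 * A * C < 0) :
    ∑' l, term A B C l = g ((B : ℝ) ^ 2 - 4 * A * C) (B : ℝ) := by
  have hUtop : Filter.Tendsto Un Filter.atTop Filter.atTop :=
    Filter.tendsto_atTop_finset_of_monotone Un_mono fun l => ⟨l.length + 1, mem_Un l⟩
  have h1 : Filter.Tendsto (fun n => ∑ l ∈ Un n, term A B C l) Filter.atTop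
      (nhds (∑' l, term A B C l)) :=
    ((summable_term hA hB hD).hasSum).comp hUtop
  have h2 : Filter.Tendsto (fun n => ∑ l ∈ Un n, term A B C l) Filter.atTop
      (nhds (hh A B C [])) := by
    have heq : (fun n => ∑ l ∈ Un n, term A B C l) =
        fun n => hh A B C [] - ∑ l ∈ Ln n, hh A B C l :=
      funext fun n => by linarith [invariant hA hB hD n]
    rw [heq]
    simpa using tendsto_const_nhds.sub (Sn_tendsto_zero hA hB hD)
  rw [tendsto_nhds_unique h1 h2, hh_nil]

lemma hasSum_term (hA : 0 < A) (hB : 0 < B) (hD : B ^ 2 - 4 * A * C < 0) :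
    HasSum (term A B C) (g ((B : ℝ) ^ 2 - 4 * A * C) (B : ℝ)) := by
  have := (summable_term hA hB hD).hasSum
  rwa [tsum_term_eq hA hB hD] at this

end Params2
end Top5

theorem stmt_1 (A B C : ℤ) (hA : 0 < A) (hB : 0 < B) (hD : B ^ 2 - 4 * A * C < 0) :
    HasSum
      (fun p : S =>
        1 / (eLab A B C p.val.1 p.val.2 * eLab A B C p.val.1 (p.val.1 + p.val.2) *
          eLab A B C p.val.2 (p.val.1 + p.val.2)))
      ((1 / ((B : ℝ) ^ 2 - 4 * A * C)) *
        (Real.arctan (Real.sqrt (-((B : ℝ) ^ 2 - 4 * A * C)) / (B : ℝ)) /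
            Real.sqrt (-((B : ℝ) ^ 2 - 4 * A * C)) -
          1 / (B : ℝ))) := by
  classical
  have hbij : Function.Bijective (fun l : List Bool => (⟨Top5.pr l, Top5.pr_mem_S l⟩ : S)) := by
    constructor
    · intro l₁ l₂ h
      exact Top5.pr_inj (Subtype.ext_iff.1 h)
    · rintro ⟨p, hp⟩
      obtain ⟨l, hl⟩ := Top5.pr_surj (p.1.1 + p.1.2 + p.2.1 + p.2.2).toNat p hp
        (Int.self_le_toNat _)
      exact ⟨l, Subtype.ext hl⟩
  rw [← Equiv.hasSum_iff (Equiv.ofBijective _ hbij)]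
  exact Top5.hasSum_term hA hB hD
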